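/- Let A ∈ ℝ^{n×d}, let 1 ≤ p < ∞, and let C ≥ 1. Then there exist an integer m ≤ (1 + 1/C)·n and a matrix A' ∈ ℝ^{m×d}, each of whose rows is a nonnegative scalar multiple of some row of A, such that: (i) ‖A'x‖_p = ‖Ax‖_p for every x ∈ ℝ^d; (ii) 𝔖^p(A') = 𝔖^p(A); and (iii) σ_{i'}^p(A') ≤ C·𝔖^p(A)/n for every i' ∈ [m]. -/

import Mathlib

open MeasureTheory Matrix Finset

open scoped Pointwise

/-- The `i`-th ℓ_p sensitivity of a matrix `A`:
`σ_i^p(A) = sup { |(Ax)_i|^p / ‖Ax‖_p^p : Ax ≠ 0 }` (zero if the set is empty). -/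
noncomputable def lpSens (p : ℝ) {R C : Type*} [Fintype R] [Fintype C]
    (A : Matrix R C ℝ) (i : R) : ℝ :=
  sSup {r : ℝ | ∃ x : C → ℝ, A.mulVec x ≠ 0 ∧
    r = |A.mulVec x i| ^ p / ∑ j, |A.mulVec x j| ^ p}

/-- The total ℓ_p sensitivity `𝔖^p(A) = Σ_i σ_i^p(A)`. -/
noncomputable def totalSens (p : ℝ) {R C : Type*} [Fintype R] [Fintype C]
    (A : Matrix R C ℝ) : ℝ := ∑ i, lpSens p A i

/-- The entrywise ℓ_p norm of a vector. -/
noncomputable def lpNorm (p : ℝ) {m : Type*} [Fintype m] (y : m → ℝ) : ℝ :=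
  (∑ i, |y i| ^ p) ^ (1 / p)

private lemma sum_abs_rpow_pos {N : Type*} [Fintype N] {y : N → ℝ} (hy : y ≠ 0) {p : ℝ}
    (hp : 0 < p) : 0 < ∑ j, |y j| ^ p := by
  obtain ⟨j, hj⟩ := Function.ne_iff.mp hy
  exact Finset.sum_pos' (fun i _ => Real.rpow_nonneg (abs_nonneg _) p)
    ⟨j, Finset.mem_univ j, Real.rpow_pos_of_pos (abs_pos.mpr hj) p⟩

private lemma sensSet_bddAbove {p : ℝ} (hp : 0 < p) {R C : Type*} [Fintype R] [Fintype C]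
    (A : Matrix R C ℝ) (i : R) :
    BddAbove {r : ℝ | ∃ x : C → ℝ, A.mulVec x ≠ 0 ∧
      r = |A.mulVec x i| ^ p / ∑ j, |A.mulVec x j| ^ p} := by
  refine ⟨1, ?_⟩
  rintro r ⟨x, hx, rfl⟩
  exact div_le_one_of_le₀ (Finset.single_le_sum
    (fun j _ => Real.rpow_nonneg (abs_nonneg _) p) (Finset.mem_univ i))
    (sum_abs_rpow_pos hx hp).le

private lemma lpSens_nonneg {p : ℝ} {R C : Type*} [Fintype R] [Fintype C]
    (A : Matrix R C ℝ) (i : R) : 0 ≤ lpSens p A i := by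
  apply Real.sSup_nonneg
  rintro r ⟨x, hx, rfl⟩
  exact div_nonneg (Real.rpow_nonneg (abs_nonneg _) p)
    (Finset.sum_nonneg fun j _ => Real.rpow_nonneg (abs_nonneg _) p)

/-- **ℓ_p sensitivity flattening**: every matrix can be replaced by an `ℓ_p`-isometric
matrix with at most `(1 + 1/C)·n` rows, each a nonnegative multiple of a row of `A`,
whose `ℓ_p` sensitivities are all at most `C·𝔖^p(A)/n`, with the same total sensitivity. -/
theorem lp_sensitivity_flattening
    (n d : ℕ) (A : Matrix (Fin n) (Fin d) ℝ) (p C : ℝ) (hp : 1 ≤ p) (hC : 1 ≤ C) :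
    ∃ (m : ℕ) (A' : Matrix (Fin m) (Fin d) ℝ),
      (m : ℝ) ≤ (1 + 1 / C) * n ∧
      (∀ i' : Fin m, ∃ (i : Fin n) (c : ℝ), 0 ≤ c ∧ ∀ j, A' i' j = c * A i j) ∧
      (∀ x : Fin d → ℝ, lpNorm p (A'.mulVec x) = lpNorm p (A.mulVec x)) ∧
      totalSens p A' = totalSens p A ∧
      ∀ i' : Fin m, lpSens p A' i' ≤ C * totalSens p A / n := by
  classical
  have hppos : (0 : ℝ) < p := lt_of_lt_of_le one_pos hp
  have hCpos : (0 : ℝ) < C := lt_of_lt_of_le one_pos hC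
  have hCinv : (0 : ℝ) ≤ 1 / C := by positivity
  by_cases hA : ∀ x : Fin d → ℝ, A.mulVec x = 0
  · -- degenerate case: `A x = 0` for all `x`; keep `A` itself.
    have hset : ∀ i : Fin n, {r : ℝ | ∃ x : Fin d → ℝ, A.mulVec x ≠ 0 ∧
        r = |A.mulVec x i| ^ p / ∑ j, |A.mulVec x j| ^ p} = (∅ : Set ℝ) := by
      intro i; ext r
      simp only [Set.mem_setOf_eq, Set.mem_empty_iff_false, iff_false, not_exists]
      intro x hx; exact absurd (hA x) hx.1
    have hsens : ∀ i : Fin n, lpSens p A i = 0 := by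
      intro i; unfold lpSens; rw [hset i, Real.sSup_empty]
    have htot : totalSens p A = 0 := by
      unfold totalSens; exact Finset.sum_eq_zero fun i _ => hsens i
    refine ⟨n, A, ?_, fun i' => ⟨i', 1, zero_le_one, fun j => (one_mul _).symm⟩,
      fun x => rfl, rfl, ?_⟩
    · have : (1 : ℝ) * n ≤ (1 + 1 / C) * n :=
        mul_le_mul_of_nonneg_right (by linarith) (Nat.cast_nonneg n)
      linarith
    · intro i'
      rw [hsens i', htot]
      simp
  · push_neg at hA
    obtain ⟨x₀, hx₀⟩ := hA
    have hn : 0 < n := by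
      obtain ⟨i, _⟩ := Function.ne_iff.mp hx₀
      exact i.pos
    have hnR : (0 : ℝ) < n := by exact_mod_cast hn
    set S := totalSens p A with hSdef
    have hbdd := fun i => sensSet_bddAbove (p := p) hppos A i
    have hT0 : 0 < ∑ j, |A.mulVec x₀ j| ^ p := sum_abs_rpow_pos hx₀ hppos
    have hmem : ∀ i : Fin n, (|A.mulVec x₀ i| ^ p / ∑ j, |A.mulVec x₀ j| ^ p) ∈
        {r : ℝ | ∃ x : Fin d → ℝ, A.mulVec x ≠ 0 ∧
          r = |A.mulVec x i| ^ p / ∑ j, |A.mulVec x j| ^ p} := fun i => ⟨x₀, hx₀, rfl⟩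
    have hσ_ge : ∀ i : Fin n, |A.mulVec x₀ i| ^ p / ∑ j, |A.mulVec x₀ j| ^ p ≤ lpSens p A i :=
      fun i => le_csSup (hbdd i) (hmem i)
    have hS1 : (1 : ℝ) ≤ S := by
      have h1 : (1 : ℝ) = ∑ i, |A.mulVec x₀ i| ^ p / ∑ j, |A.mulVec x₀ j| ^ p := by
        rw [← Finset.sum_div, div_self hT0.ne']
      rw [h1]
      exact Finset.sum_le_sum fun i _ => hσ_ge i
    have hSpos : (0 : ℝ) < S := lt_of_lt_of_le one_pos hS1
    have hCS : (0 : ℝ) < C * S := mul_pos hCpos hSpos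
    -- the splitting multiplicities
    set t : Fin n → ℝ := fun i => n * lpSens p A i / (C * S) with htdef
    have ht0 : ∀ i, 0 ≤ t i := fun i =>
      div_nonneg (mul_nonneg (Nat.cast_nonneg n) (lpSens_nonneg A i)) hCS.le
    set k : Fin n → ℕ := fun i => max 1 ⌈t i⌉₊ with hkdef
    have hk1 : ∀ i, 1 ≤ k i := fun i => le_max_left _ _
    have hkpos : ∀ i, (0 : ℝ) < (k i : ℝ) := fun i => by exact_mod_cast hk1 i
    have hkt : ∀ i, t i ≤ (k i : ℝ) := by
      intro i
      calc t i ≤ (⌈t i⌉₊ : ℝ) := Nat.le_ceil _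
        _ ≤ (k i : ℝ) := by exact_mod_cast Nat.cast_le.mpr (le_max_right _ _)
    have hk_le : ∀ i, (k i : ℝ) ≤ 1 + t i := by
      intro i
      have h1 : ((k i : ℕ) : ℝ) = max 1 (⌈t i⌉₊ : ℝ) := by
        rw [hkdef]; push_cast [Nat.cast_max]; rfl
      rw [h1]
      refine max_le (by linarith [ht0 i]) ?_
      have := Nat.ceil_lt_add_one (ht0 i)
      linarith
    -- the scaled-row matrix indexed by a sigma type
    set c : Fin n → ℝ := fun i => ((k i : ℝ) ^ (1 / p))⁻¹ with hcdef
    have hc_pos : ∀ i, 0 < c i := fun i =>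
      inv_pos.mpr (Real.rpow_pos_of_pos (hkpos i) _)
    have hcp : ∀ i, c i ^ p = ((k i : ℝ))⁻¹ := by
      intro i
      have hk0 : (0 : ℝ) ≤ (k i : ℝ) := (hkpos i).le
      rw [hcdef]
      rw [Real.inv_rpow (Real.rpow_nonneg hk0 _), ← Real.rpow_mul hk0,
        one_div_mul_cancel hppos.ne', Real.rpow_one]
    set B : Matrix (Σ i : Fin n, Fin (k i)) (Fin d) ℝ :=
      Matrix.of fun b j => c b.1 * A b.1 j with hBdef
    have hBx : ∀ (x : Fin d → ℝ) (b : Σ i : Fin n, Fin (k i)),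
        B.mulVec x b = c b.1 * A.mulVec x b.1 := by
      intro x b
      simp only [hBdef, Matrix.mulVec, dotProduct, Matrix.of_apply, mul_assoc,
        ← Finset.mul_sum]
    have habs : ∀ (x : Fin d → ℝ) (b : Σ i : Fin n, Fin (k i)),
        |B.mulVec x b| ^ p = (k b.1 : ℝ)⁻¹ * |A.mulVec x b.1| ^ p := by
      intro x b
      rw [hBx, abs_mul, abs_of_pos (hc_pos b.1),
        Real.mul_rpow (hc_pos b.1).le (abs_nonneg _), hcp]
    have hsumB : ∀ x : Fin d → ℝ,
        ∑ b : Σ i : Fin n, Fin (k i), |B.mulVec x b| ^ p = ∑ i, |A.mulVec x i| ^ p := by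
      intro x
      rw [← Finset.univ_sigma_univ, Finset.sum_sigma]
      refine Finset.sum_congr rfl fun i _ => ?_
      calc ∑ j : Fin (k i), |B.mulVec x ⟨i, j⟩| ^ p
          = ∑ _j : Fin (k i), (k i : ℝ)⁻¹ * |A.mulVec x i| ^ p :=
            Finset.sum_congr rfl fun j _ => habs x ⟨i, j⟩
        _ = (k i : ℝ) * ((k i : ℝ)⁻¹ * |A.mulVec x i| ^ p) := by
            rw [Finset.sum_const, Finset.card_univ, Fintype.card_fin, nsmul_eq_mul]
        _ = |A.mulVec x i| ^ p := by
            rw [← mul_assoc, mul_inv_cancel₀ (hkpos i).ne', one_mul]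
    have hBzero : ∀ x : Fin d → ℝ, B.mulVec x = 0 ↔ A.mulVec x = 0 := by
      intro x
      constructor
      · intro h
        funext i
        have hb := congrFun h ⟨i, ⟨0, hk1 i⟩⟩
        rw [hBx] at hb
        have := (mul_eq_zero.mp hb).resolve_left (hc_pos i).ne'
        simpa using this
      · intro h
        funext b
        rw [hBx, congrFun h b.1]
        simp
    -- sensitivity of B
    have hsetB : ∀ b : Σ i : Fin n, Fin (k i),
        {r : ℝ | ∃ x : Fin d → ℝ, B.mulVec x ≠ 0 ∧
          r = |B.mulVec x b| ^ p / ∑ j, |B.mulVec x j| ^ p} =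
        (k b.1 : ℝ)⁻¹ • {r : ℝ | ∃ x : Fin d → ℝ, A.mulVec x ≠ 0 ∧
          r = |A.mulVec x b.1| ^ p / ∑ j, |A.mulVec x j| ^ p} := by
      intro b
      ext r
      simp only [Set.mem_smul_set, Set.mem_setOf_eq, smul_eq_mul]
      constructor
      · rintro ⟨x, hx, rfl⟩
        refine ⟨|A.mulVec x b.1| ^ p / ∑ j, |A.mulVec x j| ^ p,
          ⟨x, fun h => hx ((hBzero x).mpr h), rfl⟩, ?_⟩
        rw [habs, hsumB, mul_div_assoc]
      · rintro ⟨r', ⟨x, hx, rfl⟩, rfl⟩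
        exact ⟨x, fun h => hx ((hBzero x).mp h), by rw [habs, hsumB, mul_div_assoc]⟩
    have hσB : ∀ b : Σ i : Fin n, Fin (k i),
        lpSens p B b = (k b.1 : ℝ)⁻¹ * lpSens p A b.1 := by
      intro b
      show sSup _ = _
      rw [hsetB b, Real.sSup_smul_of_nonneg (inv_nonneg.mpr (hkpos b.1).le), smul_eq_mul]
      rfl
    have htotB : totalSens p B = S := by
      unfold totalSens
      rw [← Finset.univ_sigma_univ, Finset.sum_sigma]
      rw [hSdef]
      unfold totalSens
      refine Finset.sum_congr rfl fun i _ => ?_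
      calc ∑ j : Fin (k i), lpSens p B ⟨i, j⟩
          = ∑ _j : Fin (k i), (k i : ℝ)⁻¹ * lpSens p A i :=
            Finset.sum_congr rfl fun j _ => hσB ⟨i, j⟩
        _ = (k i : ℝ) * ((k i : ℝ)⁻¹ * lpSens p A i) := by
            rw [Finset.sum_const, Finset.card_univ, Fintype.card_fin, nsmul_eq_mul]
        _ = lpSens p A i := by
            rw [← mul_assoc, mul_inv_cancel₀ (hkpos i).ne', one_mul]
    have hσB_le : ∀ b : Σ i : Fin n, Fin (k i), lpSens p B b ≤ C * S / n := by
      intro b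
      rw [hσB, inv_mul_eq_div]
      rw [div_le_div_iff₀ (hkpos b.1) hnR]
      have h1 : C * S * t b.1 ≤ C * S * (k b.1 : ℝ) :=
        mul_le_mul_of_nonneg_left (hkt b.1) hCS.le
      have h2 : C * S * t b.1 = n * lpSens p A b.1 := by
        rw [htdef]; field_simp
      nlinarith [lpSens_nonneg (p := p) A b.1]
    -- row count bound
    have hcard : ((Fintype.card (Σ i : Fin n, Fin (k i)) : ℕ) : ℝ) ≤ (1 + 1 / C) * n := by
      have h1 : (Fintype.card (Σ i : Fin n, Fin (k i)) : ℝ) = ∑ i, (k i : ℝ) := by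
        rw [Fintype.card_sigma]
        push_cast
        simp
      have h2 : ∑ i, (k i : ℝ) ≤ ∑ i : Fin n, (1 + t i) :=
        Finset.sum_le_sum fun i _ => hk_le i
      have h3 : ∑ i : Fin n, (1 + t i) = n + n / C := by
        rw [Finset.sum_add_distrib, Finset.sum_const, Finset.card_univ, Fintype.card_fin,
          nsmul_eq_mul, mul_one]
        congr 1
        rw [htdef]
        simp only
        rw [← Finset.sum_div, ← Finset.mul_sum]
        have hSsum : ∑ i : Fin n, lpSens p A i = S := rfl
        rw [hSsum, mul_comm C S, ← div_div, mul_div_assoc, div_self hSpos.ne', mul_one]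
      have h4 : (n : ℝ) + n / C = (1 + 1 / C) * n := by ring
      rw [h1]; linarith
    -- transport along an equivalence to Fin m
    set m := Fintype.card (Σ i : Fin n, Fin (k i)) with hmdef
    set e : (Σ i : Fin n, Fin (k i)) ≃ Fin m := Fintype.equivFin _ with hedef
    set A' : Matrix (Fin m) (Fin d) ℝ := B.submatrix e.symm id with hA'def
    have hA'x : ∀ (x : Fin d → ℝ) (i' : Fin m), A'.mulVec x i' = B.mulVec x (e.symm i') := by
      intro x i'; rfl
    have hA'zero : ∀ x : Fin d → ℝ, A'.mulVec x = 0 ↔ B.mulVec x = 0 := by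
      intro x
      constructor
      · intro h
        funext b
        have := congrFun h (e b)
        rwa [hA'x, e.symm_apply_apply] at this
      · intro h
        funext i'
        rw [hA'x, congrFun h (e.symm i')]
        rfl
    have hsumA' : ∀ x : Fin d → ℝ,
        ∑ i' : Fin m, |A'.mulVec x i'| ^ p = ∑ b, |B.mulVec x b| ^ p := by
      intro x
      rw [show (fun i' => |A'.mulVec x i'| ^ p) = fun i' => |B.mulVec x (e.symm i')| ^ p from
        funext fun i' => by rw [hA'x]]
      exact Equiv.sum_comp e.symm fun b => |B.mulVec x b| ^ p
    have hsensA' : ∀ i' : Fin m, lpSens p A' i' = lpSens p B (e.symm i') := by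
      intro i'
      unfold lpSens
      congr 1
      ext r
      simp only [Set.mem_setOf_eq]
      constructor
      · rintro ⟨x, hx, rfl⟩
        exact ⟨x, fun h => hx ((hA'zero x).mpr h), by rw [hA'x, hsumA']⟩
      · rintro ⟨x, hx, rfl⟩
        exact ⟨x, fun h => hx ((hA'zero x).mp h), by rw [hA'x, hsumA']⟩
    refine ⟨m, A', by exact_mod_cast hcard, ?_, ?_, ?_, ?_⟩
    · intro i'
      exact ⟨(e.symm i').1, c (e.symm i').1, (hc_pos _).le, fun j => rfl⟩
    · intro x
      unfold _root_.lpNorm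
      rw [hsumA', hsumB]
    · unfold totalSens
      rw [← htotB]
      unfold totalSens
      rw [show (fun i' => lpSens p A' i') = fun i' => lpSens p B (e.symm i') from
        funext hsensA']
      exact Equiv.sum_comp e.symm fun b => lpSens p B b
    · intro i'
      rw [hsensA']
      exact hσB_le (e.symm i')
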